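/- Suppose S : ℝⁿ → ℝ is twice continuously differentiable and satisfies the gradient-Killing equation ∂_i ∂_j S(x) = Σ_l Γ^l_{ij}(x) ∂_l S(x) for all x and all i, j. Then along every geodesic of g the quantity s · Σ_i ∂_i S(x(s)) ẋ^i(s) − S(x(s)) is constant in s; this is the time-dependent Noether first integral φ_{IJ} = t g_{ij} S^{,i} ẋ^j − S associated with a gradient Killing vector. -/

import Mathlib

/-- The Christoffel symbols `Γ^i_{jk}(x) = ½ Σ_l (g(x)⁻¹)_{il}
(∂_j g_{lk}(x) + ∂_k g_{lj}(x) − ∂_l g_{jk}(x))` of a metric `g` on `ℝⁿ`,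
given in coordinates; `∂_j` is the directional derivative along `Pi.single j 1`. -/
noncomputable def christoffel {n : ℕ} (g : (Fin n → ℝ) → Matrix (Fin n) (Fin n) ℝ)
    (i j k : Fin n) (x : Fin n → ℝ) : ℝ :=
  (1 / 2) * ∑ l, (g x)⁻¹ i l *
    (fderiv ℝ (fun y => g y l k) x (Pi.single j 1)
      + fderiv ℝ (fun y => g y l j) x (Pi.single k 1)
      - fderiv ℝ (fun y => g y j k) x (Pi.single l 1))

/-- A geodesic of `g`: a twice continuously differentiable curve `γ : ℝ → ℝⁿ` with
`ẍ^i = −Σ_{j,k} Γ^i_{jk}(x) ẋ^j ẋ^k`. -/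
def IsGeodesic {n : ℕ} (g : (Fin n → ℝ) → Matrix (Fin n) (Fin n) ℝ)
    (γ : ℝ → Fin n → ℝ) : Prop :=
  (∀ i, ContDiff ℝ 2 (fun s => γ s i)) ∧
  ∀ s i, deriv (deriv (fun t => γ t i)) s =
    - ∑ j, ∑ k, christoffel g i j k (γ s) *
      deriv (fun t => γ t j) s * deriv (fun t => γ t k) s


/-- A gradient Killing vector generated by `S` (`∂_i ∂_j S = Σ_l Γ^l_{ij} ∂_l S`)
gives the time-dependent Noether first integral `s Σ_i ∂_i S(x(s)) ẋ^i(s) − S(x(s))`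
of the geodesic equations. -/
theorem gradient_killing_time_dependent_first_integral {n : ℕ} (hn : 1 ≤ n)
    (g : (Fin n → ℝ) → Matrix (Fin n) (Fin n) ℝ)
    (hg_symm : ∀ x i j, g x i j = g x j i)
    (hg_inv : ∀ x, IsUnit (g x).det)
    (hg_C1 : ∀ i j, ContDiff ℝ 1 fun x => g x i j)
    (S : (Fin n → ℝ) → ℝ) (hS : ContDiff ℝ 2 S)
    (hgradKV : ∀ x i j,
      fderiv ℝ (fun y => fderiv ℝ S y (Pi.single j 1)) x (Pi.single i 1)
        = ∑ l, christoffel g l i j x * fderiv ℝ S x (Pi.single l 1))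
    (γ : ℝ → Fin n → ℝ) (hγ : IsGeodesic g γ) (s₁ s₂ : ℝ) :
    s₁ * (∑ i, fderiv ℝ S (γ s₁) (Pi.single i 1) * deriv (fun t => γ t i) s₁) - S (γ s₁)
      = s₂ * (∑ i, fderiv ℝ S (γ s₂) (Pi.single i 1) * deriv (fun t => γ t i) s₂) - S (γ s₂) := by
  classical
  obtain ⟨hγC2, hgeo⟩ := hγ
  have hγdiff : ∀ i, Differentiable ℝ fun t => γ t i :=
    fun i => (hγC2 i).differentiable (by norm_num)
  have hx' : ∀ s, HasDerivAt γ (fun i => deriv (fun t => γ t i) s) s := by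
    intro s
    rw [hasDerivAt_pi]
    exact fun i => ((hγdiff i) s).hasDerivAt
  have hx'diff : ∀ i, Differentiable ℝ (deriv fun t => γ t i) := by
    intro i
    have h2 : ContDiff ℝ ((1 : WithTop ℕ∞) + 1) (fun t => γ t i) := by
      exact_mod_cast hγC2 i
    rw [contDiff_succ_iff_deriv] at h2
    exact h2.2.2.differentiable (by norm_num)
  have hsingle : ∀ s, (fun i => deriv (fun t => γ t i) s)
      = ∑ j, deriv (fun t => γ t j) s • (Pi.single j 1 : Fin n → ℝ) := by
    intro s
    funext i
    simp [Finset.sum_apply, Pi.single_apply]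
  have chain : ∀ (f : (Fin n → ℝ) → ℝ), ContDiff ℝ 1 f → ∀ s,
      HasDerivAt (fun t => f (γ t))
        (∑ j, deriv (fun t => γ t j) s * fderiv ℝ f (γ s) (Pi.single j 1)) s := by
    intro f hf s
    have h1 : HasDerivAt (f ∘ γ)
        (fderiv ℝ f (γ s) (fun i => deriv (fun t => γ t i) s)) s :=
      (hf.differentiable (by norm_num) (γ s)).hasFDerivAt.comp_hasDerivAt s (hx' s)
    convert h1 using 1
    · rfl
    rw [hsingle s, map_sum]
    exact Finset.sum_congr rfl fun j _ => by rw [map_smul, smul_eq_mul]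
  have hDc : ∀ i, ContDiff ℝ 1 fun y => fderiv ℝ S y (Pi.single i 1) := fun i =>
    (hS.fderiv_right (by norm_num)).clm_apply contDiff_const
  have swap3 : ∀ (F : Fin n → Fin n → Fin n → ℝ),
      ∑ i, ∑ j, ∑ l, F i j l = ∑ l, ∑ j, ∑ i, F i j l := by
    intro F
    calc ∑ i, ∑ j, ∑ l, F i j l = ∑ j, ∑ l, ∑ i, F i j l := by
          rw [Finset.sum_comm]
          exact Finset.sum_congr rfl fun _ _ => Finset.sum_comm
      _ = ∑ l, ∑ j, ∑ i, F i j l := Finset.sum_comm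
  have hA : ∀ s, HasDerivAt
      (fun t => ∑ i, fderiv ℝ S (γ t) (Pi.single i 1) * deriv (fun u => γ u i) t) 0 s := by
    intro s
    have h := HasDerivAt.sum (u := Finset.univ) (x := s)
      (A := fun i t => fderiv ℝ S (γ t) (Pi.single i 1) * deriv (fun u => γ u i) t)
      (A' := fun i =>
        (∑ j, deriv (fun t => γ t j) s *
          fderiv ℝ (fun y => fderiv ℝ S y (Pi.single i 1)) (γ s) (Pi.single j 1))
          * deriv (fun u => γ u i) s
        + fderiv ℝ S (γ s) (Pi.single i 1) * deriv (deriv (fun u => γ u i)) s)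
      (fun i _ => (chain _ (hDc i) s).mul ((hx'diff i s).hasDerivAt))
    convert h using 1
    any_goals rfl
    · funext t; simp only [Finset.sum_apply]
    symm
    set v : Fin n → ℝ := fun i => deriv (fun t => γ t i) s with hv
    set d : Fin n → ℝ := fun i => fderiv ℝ S (γ s) (Pi.single i 1) with hd
    set c : Fin n → Fin n → Fin n → ℝ := fun i j k => christoffel g i j k (γ s) with hc
    have e1 : ∀ i j, fderiv ℝ (fun y => fderiv ℝ S y (Pi.single i 1)) (γ s) (Pi.single j 1)
        = ∑ l, c l j i * d l := fun i j => hgradKV (γ s) j i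
    have e2 : ∀ i, deriv (deriv (fun u => γ u i)) s = -∑ j, ∑ k, c i j k * v j * v k :=
      fun i => hgeo s i
    calc (∑ i, ((∑ j, v j * fderiv ℝ (fun y => fderiv ℝ S y (Pi.single i 1)) (γ s)
              (Pi.single j 1)) * v i + d i * deriv (deriv (fun u => γ u i)) s))
        = ∑ i, ((∑ j, ∑ l, c l j i * d l * v j * v i)
            - ∑ j, ∑ k, c i j k * d i * v j * v k) := by
          refine Finset.sum_congr rfl fun i _ => ?_
          simp only [e1, e2]
          rw [mul_neg, ← sub_eq_add_neg, Finset.sum_mul, Finset.mul_sum]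
          congr 1
          · refine Finset.sum_congr rfl fun j _ => ?_
            rw [Finset.mul_sum, Finset.sum_mul]
            exact Finset.sum_congr rfl fun l _ => by ring
          · refine Finset.sum_congr rfl fun j _ => ?_
            rw [Finset.mul_sum]
            exact Finset.sum_congr rfl fun k _ => by ring
      _ = 0 := by
          rw [Finset.sum_sub_distrib, swap3 (fun i j l => c l j i * d l * v j * v i),
            sub_eq_zero]
  have hF : ∀ s, HasDerivAt
      (fun t => t * (∑ i, fderiv ℝ S (γ t) (Pi.single i 1) * deriv (fun u => γ u i) t)
        - S (γ t)) 0 s := by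
    intro s
    have h1 := (hasDerivAt_id s).mul (hA s)
    have h2 := chain S (hS.of_le one_le_two) s
    have h3 := h1.sub h2
    convert h3 using 1
    any_goals rfl
    simp only [mul_zero, one_mul, add_zero, id_eq]
    symm
    rw [sub_eq_zero]
    exact Finset.sum_congr rfl fun j _ => mul_comm _ _
  exact is_const_of_deriv_eq_zero (fun s => (hF s).differentiableAt)
    (fun s => (hF s).deriv) s₁ s₂
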